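/- Let μ = 1/4. (a) If u is a small local sub-harmonic of L_{1/4} then limsup_{δ(x)→0} u(x)/δ(x)^{1/2} < ∞. (b) If U is a large local sub-harmonic of L_{1/4} then limsup_{δ(x)→0} U(x)/(δ(x)^{1/2}·log(1/δ(x))) > 0. -/

import Mathlib

open Set Metric MeasureTheory Real

noncomputable section

/-- Distance to the boundary of `Ω`. -/
def bdist {N : ℕ} (Ω : Set (EuclideanSpace ℝ (Fin N))) (x : EuclideanSpace ℝ (Fin N)) : ℝ :=
  Metric.infDist x Ωᶜ

/-- The collar `Ω_ρ = {x ∈ Ω : δ(x) < ρ}`. -/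
def collar {N : ℕ} (Ω : Set (EuclideanSpace ℝ (Fin N))) (ρ : ℝ) :
    Set (EuclideanSpace ℝ (Fin N)) :=
  {x ∈ Ω | bdist Ω x < ρ}

/-- The ring `Ω_{ε,ρ} = {x ∈ Ω : ε < δ(x) < ρ}`. -/
def ring' {N : ℕ} (Ω : Set (EuclideanSpace ℝ (Fin N))) (ε ρ : ℝ) :
    Set (EuclideanSpace ℝ (Fin N)) :=
  {x ∈ Ω | ε < bdist Ω x ∧ bdist Ω x < ρ}

/-- The Laplacian. -/
def lap {N : ℕ} (f : EuclideanSpace ℝ (Fin N) → ℝ) (x : EuclideanSpace ℝ (Fin N)) : ℝ :=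
  ∑ i : Fin N, fderiv ℝ (fun y => fderiv ℝ f y (EuclideanSpace.single i 1)) x
    (EuclideanSpace.single i 1)

/-- `ρ₀` is a good collar width: `δ` is `C²` on `Ω_{ρ₀}`, `|∇δ| = 1` there, `Δδ` bounded. -/
def GoodCollar {N : ℕ} (Ω : Set (EuclideanSpace ℝ (Fin N))) (ρ₀ : ℝ) : Prop :=
  0 < ρ₀ ∧ ContDiffOn ℝ 2 (bdist Ω) (collar Ω ρ₀) ∧
    (∀ x ∈ collar Ω ρ₀, ‖gradient (bdist Ω) x‖ = 1) ∧
    ∃ M, ∀ x ∈ collar Ω ρ₀, |lap (bdist Ω) x| ≤ M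

/-- A super-harmonic of `L_μ = -Δ - μ/δ²` on `G`. -/
def SuperHarm {N : ℕ} (Ω : Set (EuclideanSpace ℝ (Fin N))) (μ : ℝ)
    (G : Set (EuclideanSpace ℝ (Fin N))) (h : EuclideanSpace ℝ (Fin N) → ℝ) : Prop :=
  ContDiffOn ℝ 2 h G ∧ ∀ x ∈ G, 0 ≤ -(lap h x) - μ / (bdist Ω x) ^ 2 * h x

/-- A sub-harmonic of `L_μ = -Δ - μ/δ²` on `G`. -/
def SubHarm {N : ℕ} (Ω : Set (EuclideanSpace ℝ (Fin N))) (μ : ℝ)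
    (G : Set (EuclideanSpace ℝ (Fin N))) (h : EuclideanSpace ℝ (Fin N) → ℝ) : Prop :=
  ContDiffOn ℝ 2 h G ∧ ∀ x ∈ G, -(lap h x) - μ / (bdist Ω x) ^ 2 * h x ≤ 0

/-- A positive local super-harmonic of `L_μ`, defined on the collar `Ω_σ`. -/
def PosSuperHarmOn {N : ℕ} (Ω : Set (EuclideanSpace ℝ (Fin N))) (μ σ : ℝ)
    (h : EuclideanSpace ℝ (Fin N) → ℝ) : Prop :=
  SuperHarm Ω μ (collar Ω σ) h ∧ ∀ x ∈ collar Ω σ, 0 < h x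

/-- A sub-solution of `(*)`: `-Δu - (μ/δ²)u + u^p/δ^s = 0` on `G`. -/
def SubSol {N : ℕ} (Ω : Set (EuclideanSpace ℝ (Fin N))) (μ s p : ℝ)
    (G : Set (EuclideanSpace ℝ (Fin N))) (u : EuclideanSpace ℝ (Fin N) → ℝ) : Prop :=
  ContDiffOn ℝ 2 u G ∧ (∀ x ∈ G, 0 ≤ u x) ∧
    ∀ x ∈ G, -(lap u x) - μ / (bdist Ω x) ^ 2 * u x + (u x) ^ p / (bdist Ω x) ^ s ≤ 0

/-- A super-solution of `(*)` on `G`. -/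
def SuperSol {N : ℕ} (Ω : Set (EuclideanSpace ℝ (Fin N))) (μ s p : ℝ)
    (G : Set (EuclideanSpace ℝ (Fin N))) (u : EuclideanSpace ℝ (Fin N) → ℝ) : Prop :=
  ContDiffOn ℝ 2 u G ∧ (∀ x ∈ G, 0 < u x) ∧
    ∀ x ∈ G, 0 ≤ -(lap u x) - μ / (bdist Ω x) ^ 2 * u x + (u x) ^ p / (bdist Ω x) ^ s

/-- A regularized distance `(d, c)` on `Ω`. -/
def RegDist {N : ℕ} (Ω : Set (EuclideanSpace ℝ (Fin N))) (d : EuclideanSpace ℝ (Fin N) → ℝ)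
    (c : ℝ) : Prop :=
  1 ≤ c ∧ ContDiffOn ℝ 2 d Ω ∧ (∀ x ∈ Ω, 0 < d x) ∧
    (∀ x ∈ Ω, c⁻¹ * bdist Ω x ≤ d x ∧ d x ≤ c * bdist Ω x) ∧
    (∀ x ∈ Ω, ‖gradient d x‖ ≤ c) ∧ (∀ x ∈ Ω, |lap d x| ≤ c / d x)

/-- A local sub-harmonic `u` (defined on `Ω_ρ`) is *small* if
`limsup_{δ(x)→0} u(x)/h(x) < ∞` for every positive local super-harmonic `h` of `L_μ`. -/
def SmallSubHarm {N : ℕ} (Ω : Set (EuclideanSpace ℝ (Fin N))) (μ : ℝ)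
    (u : EuclideanSpace ℝ (Fin N) → ℝ) (ρ : ℝ) : Prop :=
  ∀ σ, 0 < σ → ∀ h : EuclideanSpace ℝ (Fin N) → ℝ, PosSuperHarmOn Ω μ σ h →
    ∃ C : ℝ, ∃ τ, 0 < τ ∧ τ ≤ min ρ σ ∧ ∀ x ∈ collar Ω τ, u x / h x ≤ C

/-- A local sub-harmonic `u` (defined on `Ω_ρ`) is *large* if
`limsup_{δ(x)→0} u(x)/h(x) > 0` for every positive local super-harmonic `h` of `L_μ`. -/
def LargeSubHarm {N : ℕ} (Ω : Set (EuclideanSpace ℝ (Fin N))) (μ : ℝ)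
    (u : EuclideanSpace ℝ (Fin N) → ℝ) (ρ : ℝ) : Prop :=
  ∀ σ, 0 < σ → ∀ h : EuclideanSpace ℝ (Fin N) → ℝ, PosSuperHarmOn Ω μ σ h →
    ∃ c, 0 < c ∧ ∀ τ, 0 < τ → τ ≤ min ρ σ → ∃ x ∈ collar Ω τ, c ≤ u x / h x

-- ### Auxiliary development

-- ### auxiliary facts

lemma collar_open {N : ℕ} {Ω : Set (EuclideanSpace ℝ (Fin N))} (hΩo : IsOpen Ω) (ρ : ℝ) :
    IsOpen (collar Ω ρ) := by
  have : collar Ω ρ = Ω ∩ (bdist Ω) ⁻¹' (Iio ρ) := rfl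
  rw [this]
  exact hΩo.inter (IsOpen.preimage (continuous_infDist_pt _) isOpen_Iio)

lemma collar_mono {N : ℕ} {Ω : Set (EuclideanSpace ℝ (Fin N))} {σ ρ : ℝ} (h : σ ≤ ρ) :
    collar Ω σ ⊆ collar Ω ρ := fun x hx => ⟨hx.1, lt_of_lt_of_le hx.2 h⟩

lemma bdist_pos {N : ℕ} (hN : 2 ≤ N) {Ω : Set (EuclideanSpace ℝ (Fin N))} (hΩo : IsOpen Ω)
    (hΩb : Bornology.IsBounded Ω) {x : EuclideanSpace ℝ (Fin N)} (hx : x ∈ Ω) :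
    0 < bdist Ω x := by
  haveI : Nontrivial (EuclideanSpace ℝ (Fin N)) := by
    refine ⟨EuclideanSpace.single (⟨0, by omega⟩ : Fin N) (1:ℝ), 0, ?_⟩
    intro h
    have := congrArg (fun v => v (⟨0, by omega⟩ : Fin N)) h
    simp at this
  have hne : (Ωᶜ).Nonempty := by
    by_contra h
    rw [Set.not_nonempty_iff_eq_empty, Set.compl_empty_iff] at h
    exact NormedSpace.unbounded_univ ℝ (EuclideanSpace ℝ (Fin N)) (h ▸ hΩb)
  exact (IsClosed.notMem_iff_infDist_pos hΩo.isClosed_compl hne).mp (by simpa using hx)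

-- ### Laplacian chain rule

lemma differentiableAt_deriv_of_contDiffAt {φ : ℝ → ℝ} {t : ℝ} (hφ : ContDiffAt ℝ 2 φ t) :
    DifferentiableAt ℝ (deriv φ) t := by
  have h1 : ContDiffAt ℝ 1 (fderiv ℝ φ) t := hφ.fderiv_right (by norm_num)
  have h2 : DifferentiableAt ℝ (fderiv ℝ φ) t := h1.differentiableAt one_ne_zero
  have h3 : DifferentiableAt ℝ (fun s => fderiv ℝ φ s 1) t :=
    ((ContinuousLinearMap.apply ℝ ℝ (1 : ℝ)).differentiableAt).comp t h2
  have : (fun s => fderiv ℝ φ s 1) = deriv φ := by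
    funext s; exact fderiv_apply_one_eq_deriv
  rwa [this] at h3

lemma lap_comp {N : ℕ} (f : EuclideanSpace ℝ (Fin N) → ℝ) (φ : ℝ → ℝ)
    (x : EuclideanSpace ℝ (Fin N)) (hf : ContDiffAt ℝ 2 f x) (hφ : ContDiffAt ℝ 2 φ (f x)) :
    lap (fun y => φ (f y)) x
      = deriv (deriv φ) (f x) * ∑ i : Fin N, (fderiv ℝ f x (EuclideanSpace.single i 1))^2
        + deriv φ (f x) * lap f x := by
  have h2 : (2 : WithTop ℕ∞) ≠ ↑(⊤ : ℕ∞) := by decide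
  have hev : ∀ᶠ y in nhds x, ContDiffAt ℝ 2 f y ∧ ContDiffAt ℝ 2 φ (f y) := by
    filter_upwards [hf.eventually h2,
      hf.continuousAt.preimage_mem_nhds (hφ.eventually h2)] with y h1 h2
    exact ⟨h1, h2⟩
  have hfd : ∀ᶠ y in nhds x,
      fderiv ℝ (fun z => φ (f z)) y = deriv φ (f y) • fderiv ℝ f y := by
    filter_upwards [hev] with y hy
    have hdf : HasFDerivAt f (fderiv ℝ f y) y := (hy.1.differentiableAt two_ne_zero).hasFDerivAt
    have hdφ : HasDerivAt φ (deriv φ (f y)) (f y) :=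
      (hy.2.differentiableAt two_ne_zero).hasDerivAt
    exact (hdφ.comp_hasFDerivAt y hdf).fderiv
  have hdfx : HasFDerivAt f (fderiv ℝ f x) x := (hf.differentiableAt two_ne_zero).hasFDerivAt
  have hB : HasFDerivAt (fderiv ℝ f) (fderiv ℝ (fderiv ℝ f) x) x :=
    (((hf.fderiv_right (le_refl 2 : (1:WithTop ℕ∞) + 1 ≤ 2)).differentiableAt one_ne_zero)).hasFDerivAt
  set F := fderiv ℝ (fderiv ℝ f) x with hF
  have ha : HasFDerivAt (fun y => deriv φ (f y))
      (deriv (deriv φ) (f x) • fderiv ℝ f x) x :=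
    ((differentiableAt_deriv_of_contDiffAt hφ).hasDerivAt).comp_hasFDerivAt x hdfx
  have key : ∀ i : Fin N,
      fderiv ℝ (fun y => fderiv ℝ (fun z => φ (f z)) y (EuclideanSpace.single i 1)) x
          (EuclideanSpace.single i 1)
        = deriv (deriv φ) (f x) * (fderiv ℝ f x (EuclideanSpace.single i 1))^2
          + deriv φ (f x) *
            fderiv ℝ (fun y => fderiv ℝ f y (EuclideanSpace.single i 1)) x
              (EuclideanSpace.single i 1) := by
    intro i
    set e := EuclideanSpace.single i (1:ℝ) with he
    have hbi : HasFDerivAt (fun y => fderiv ℝ f y e)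
        ((ContinuousLinearMap.apply ℝ ℝ e).comp F) x :=
      ((ContinuousLinearMap.apply ℝ ℝ e).hasFDerivAt).comp x hB
    have hmul : HasFDerivAt (fun y => deriv φ (f y) * fderiv ℝ f y e)
        (deriv φ (f x) • ((ContinuousLinearMap.apply ℝ ℝ e).comp F)
          + fderiv ℝ f x e • (deriv (deriv φ) (f x) • fderiv ℝ f x)) x :=
      ha.mul hbi
    have heq : (fun y => fderiv ℝ (fun z => φ (f z)) y e)
        =ᶠ[nhds x] (fun y => deriv φ (f y) * fderiv ℝ f y e) := by
      filter_upwards [hfd] with y hy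
      rw [hy]; rfl
    have : fderiv ℝ (fun y => fderiv ℝ (fun z => φ (f z)) y e) x
        = fderiv ℝ (fun y => deriv φ (f y) * fderiv ℝ f y e) x := heq.fderiv_eq
    rw [this, hmul.fderiv, hbi.fderiv]
    simp [ContinuousLinearMap.add_apply, ContinuousLinearMap.smul_apply,
      ContinuousLinearMap.comp_apply, ContinuousLinearMap.apply_apply]
    ring
  unfold lap
  rw [Finset.sum_congr rfl (fun i _ => key i), Finset.sum_add_distrib,
    ← Finset.mul_sum, ← Finset.mul_sum]

lemma sum_sq_fderiv {N : ℕ} (g : EuclideanSpace ℝ (Fin N) → ℝ) (x : EuclideanSpace ℝ (Fin N))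
    (hg : ‖gradient g x‖ = 1) :
    ∑ i : Fin N, (fderiv ℝ g x (EuclideanSpace.single i 1))^2 = 1 := by
  have hcomp : ∀ v, fderiv ℝ g x v = inner (𝕜 := ℝ) (gradient g x) v := by
    intro v
    rw [gradient, InnerProductSpace.toDual_symm_apply]
  have hco : ∀ i : Fin N, fderiv ℝ g x (EuclideanSpace.single i 1) = gradient g x i := by
    intro i
    rw [hcomp, EuclideanSpace.inner_single_right]
    simp
  calc ∑ i : Fin N, (fderiv ℝ g x (EuclideanSpace.single i 1))^2
      = ∑ i : Fin N, (gradient g x i)^2 := by simp [hco]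
    _ = ‖gradient g x‖^2 := by
        rw [EuclideanSpace.norm_eq, Real.sq_sqrt (by positivity)]
        simp [Real.norm_eq_abs, sq_abs]
    _ = 1 := by rw [hg]; norm_num

-- ### one-dimensional calculus

def phi1 : ℝ → ℝ := fun s => s^(1/2:ℝ) - s^(3/4:ℝ)
def phi2 : ℝ → ℝ := fun s => -(s^(1/2:ℝ) * Real.log s) - s^(3/4:ℝ)

lemma deriv_pair (φ d1 d2 : ℝ → ℝ) {t : ℝ} (ht : 0 < t)
    (h1 : ∀ s, 0 < s → HasDerivAt φ (d1 s) s)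
    (h2 : HasDerivAt d1 (d2 t) t) :
    deriv φ t = d1 t ∧ deriv (deriv φ) t = d2 t := by
  have hev : deriv φ =ᶠ[nhds t] d1 := by
    filter_upwards [Ioi_mem_nhds ht] with s hs
    exact (h1 s hs).deriv
  exact ⟨(h1 t ht).deriv, by rw [hev.deriv_eq]; exact h2.deriv⟩

lemma rpow_helper {t : ℝ} (ht : 0 < t) {p q : ℝ} (h : p - 1 = q) :
    HasDerivAt (fun s : ℝ => s ^ p) (p * t ^ q) t := by
  rw [← h]; exact Real.hasDerivAt_rpow_const (Or.inl ht.ne')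

lemma rpow_mul_inv {t : ℝ} (ht : 0 < t) {p q : ℝ} (h : p - 1 = q) :
    t ^ p * t⁻¹ = t ^ q := by
  rw [← Real.rpow_neg_one t, ← Real.rpow_add ht, show p + -1 = q by linarith]

lemma phi1_calc {t : ℝ} (ht : 0 < t) :
    deriv phi1 t = (1/2)*t^(-(1/2):ℝ) - (3/4)*t^(-(1/4):ℝ) ∧
      deriv (deriv phi1) t = -(1/4)*t^(-(3/2):ℝ) + (3/16)*t^(-(5/4):ℝ) := by
  apply deriv_pair _ (fun s => (1/2)*s^(-(1/2):ℝ) - (3/4)*s^(-(1/4):ℝ)) _ ht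
  · intro s hs
    exact ((rpow_helper hs (p := 1/2) (q := -(1/2)) (by norm_num)).sub
      (rpow_helper hs (p := 3/4) (q := -(1/4)) (by norm_num))).congr_deriv (by ring)
  · exact (((rpow_helper ht (p := -(1/2)) (q := -(3/2)) (by norm_num)).const_mul (1/2:ℝ)).sub
      ((rpow_helper ht (p := -(1/4)) (q := -(5/4)) (by norm_num)).const_mul (3/4:ℝ))).congr_deriv
      (by ring)

lemma phi2_calc {t : ℝ} (ht : 0 < t) :
    deriv phi2 t = -((1/2)*t^(-(1/2):ℝ)*Real.log t + t^(-(1/2):ℝ)) - (3/4)*t^(-(1/4):ℝ) ∧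
      deriv (deriv phi2) t = (1/4)*t^(-(3/2):ℝ)*Real.log t + (3/16)*t^(-(5/4):ℝ) := by
  apply deriv_pair _
    (fun s => -((1/2)*s^(-(1/2):ℝ)*Real.log s + s^(-(1/2):ℝ)) - (3/4)*s^(-(1/4):ℝ)) _ ht
  · intro s hs
    have hlog : HasDerivAt Real.log s⁻¹ s := Real.hasDerivAt_log hs.ne'
    have hmul : HasDerivAt (fun y : ℝ => y^(1/2:ℝ) * Real.log y)
        ((1/2) * s^(-(1/2):ℝ) * Real.log s + s^(1/2:ℝ) * s⁻¹) s :=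
      (rpow_helper hs (p := 1/2) (q := -(1/2)) (by norm_num)).mul hlog
    have hx : s ^ ((1:ℝ)/2) * s⁻¹ = s ^ (-(1/2):ℝ) :=
      rpow_mul_inv hs (p := 1/2) (q := -(1/2)) (by norm_num)
    exact ((hmul.neg).sub (rpow_helper hs (p := 3/4) (q := -(1/4)) (by norm_num))).congr_deriv
      (by linear_combination -hx)
  · have hlog : HasDerivAt Real.log t⁻¹ t := Real.hasDerivAt_log ht.ne'
    have hmul : HasDerivAt (fun y : ℝ => (1/2)*y^(-(1/2):ℝ) * Real.log y)
        (((1/2) * (-(1/2) * t^(-(3/2):ℝ))) * Real.log t + (1/2)*t^(-(1/2):ℝ) * t⁻¹) t := by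
      have h1 : HasDerivAt (fun y : ℝ => (1/2)*y^(-(1/2):ℝ))
          ((1/2) * (-(1/2) * t^(-(3/2):ℝ))) t :=
        (rpow_helper ht (p := -(1/2)) (q := -(3/2)) (by norm_num)).const_mul (1/2:ℝ)
      exact h1.mul hlog
    have hrest : HasDerivAt (fun y : ℝ => y^(-(1/2):ℝ)) (-(1/2) * t^(-(3/2):ℝ)) t :=
      rpow_helper ht (by norm_num)
    have hx : t ^ (-(1/2):ℝ) * t⁻¹ = t ^ (-(3/2):ℝ) :=
      rpow_mul_inv ht (p := -(1/2)) (q := -(3/2)) (by norm_num)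
    exact (((hmul.add hrest).neg).sub
      ((rpow_helper ht (p := -(1/4)) (q := -(5/4)) (by norm_num)).const_mul (3/4:ℝ))).congr_deriv
      (by linear_combination (-(1/2:ℝ)) * hx)

lemma phi1_contDiffAt {t : ℝ} (ht : 0 < t) : ContDiffAt ℝ 2 phi1 t :=
  (Real.contDiffAt_rpow_const_of_ne ht.ne').sub (Real.contDiffAt_rpow_const_of_ne ht.ne')

lemma phi2_contDiffAt {t : ℝ} (ht : 0 < t) : ContDiffAt ℝ 2 phi2 t :=
  (((Real.contDiffAt_rpow_const_of_ne ht.ne').mul ((Real.contDiffAt_log).2 ht.ne')).neg).sub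
    (Real.contDiffAt_rpow_const_of_ne ht.ne')

-- ### algebra

lemma quarter_pow {t : ℝ} (ht : 0 < t) {p : ℝ} (n : ℕ) (h : (n:ℝ)/4 = p) :
    t ^ p = (t^((1:ℝ)/4))^n := by
  rw [← Real.rpow_natCast (t^((1:ℝ)/4)) n, ← Real.rpow_mul ht.le, ← h]
  congr 1; ring

lemma quarter_pow_neg {t : ℝ} (ht : 0 < t) {p : ℝ} (n : ℕ) (h : -((n:ℝ)/4) = p) :
    t ^ p = ((t^((1:ℝ)/4))^n)⁻¹ := by
  rw [← h, Real.rpow_neg ht.le, quarter_pow ht n rfl]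

lemma abs_bound_mul {a b K M : ℝ} (hab : |a| ≤ b) (hK : |K| ≤ M) : a * K ≤ b * M := by
  calc a * K ≤ |a * K| := le_abs_self _
    _ = |a| * |K| := abs_mul _ _
    _ ≤ b * M := mul_le_mul hab hK (abs_nonneg _) ((abs_nonneg a).trans hab)

lemma spow_facts {s : ℝ} (hs : 0 < s) (hs1 : s ≤ 1) {M : ℝ} (hM : 1 ≤ M)
    (hsM : M * s^2 ≤ 1/128) :
    M * s^5 ≤ (1/128) * s^3 ∧ M * s^6 ≤ (1/128) * s^3 ∧ M * s^7 ≤ (1/128) * s^3 := by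
  have h3 : (0:ℝ) ≤ s^3 := by positivity
  have k1 : M * s^5 = (M * s^2) * s^3 := by ring
  have e : ∀ n : ℕ, s ^ (3 + n) ≤ s ^ 3 := by
    intro n
    calc s ^ (3+n) = s^3 * s^n := by ring
      _ ≤ s^3 * 1 := by
          apply mul_le_mul_of_nonneg_left _ h3
          exact pow_le_one₀ hs.le hs1
      _ = s^3 := by ring
  refine ⟨?_, ?_, ?_⟩
  · rw [k1]; exact mul_le_mul_of_nonneg_right hsM h3 |>.trans (by linarith)
  · have h : M * s^6 = (M*s^2) * s^4 := by ring
    rw [h]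
    calc (M*s^2) * s^4 ≤ (1/128) * s^4 := mul_le_mul_of_nonneg_right hsM (by positivity)
      _ ≤ (1/128) * s^3 := by
          have := e 1; norm_num at this ⊢
          linarith [mul_le_mul_of_nonneg_left this (by norm_num : (0:ℝ) ≤ 1/128)]
  · have h : M * s^7 = (M*s^2) * s^5 := by ring
    rw [h]
    calc (M*s^2) * s^5 ≤ (1/128) * s^5 := mul_le_mul_of_nonneg_right hsM (by positivity)
      _ ≤ (1/128) * s^3 := by
          have := e 2; norm_num at this ⊢
          linarith [mul_le_mul_of_nonneg_left this (by norm_num : (0:ℝ) ≤ 1/128)]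

lemma alg1 {s K M : ℝ} (hs : 0 < s) (hs1 : s ≤ 1) (hM : 1 ≤ M) (hK : |K| ≤ M)
    (hsM : M * s^2 ≤ 1/128) :
    0 ≤ -((-(1/4)*((s^6)⁻¹) + (3/16)*((s^5)⁻¹)) + ((1/2)*((s^2)⁻¹) - (3/4)*s⁻¹) * K)
        - (1/4)/((s^4)^2) * (s^2 - s^3) := by
  have hs8 : (0:ℝ) < s^8 := by positivity
  rw [← mul_nonneg_iff_of_pos_right hs8]
  have hexp : (-((-(1/4)*((s^6)⁻¹) + (3/16)*((s^5)⁻¹)) + ((1/2)*((s^2)⁻¹) - (3/4)*s⁻¹) * K)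
      - (1/4)/((s^4)^2) * (s^2 - s^3)) * s^8
      = (1/16)*s^3 - ((1/2)*s^6 - (3/4)*s^7) * K := by
    field_simp
    ring
  rw [hexp, sub_nonneg]
  obtain ⟨f5, f6, f7⟩ := spow_facts hs hs1 hM hsM
  have habs : |(1/2)*s^6 - (3/4)*s^7| ≤ (1/2)*s^6 + (3/4)*s^7 := by
    have h6 : (0:ℝ) ≤ s^6 := by positivity
    have h7 : (0:ℝ) ≤ s^7 := by positivity
    rw [abs_le]; constructor <;> nlinarith
  have := abs_bound_mul habs hK
  nlinarith [this]

lemma alg2 {s L K M : ℝ} (hs : 0 < s) (hs1 : s ≤ 1) (hM : 1 ≤ M) (hK : |K| ≤ M)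
    (hsM : M * s^2 ≤ 1/128) (hL : 0 ≤ L) (hLs : L * s ≤ 4) :
    0 ≤ -((-(1/4)*((s^6)⁻¹)*L + (3/16)*((s^5)⁻¹))
          + ((1/2)*((s^2)⁻¹)*L - (s^2)⁻¹ - (3/4)*s⁻¹) * K)
        - (1/4)/((s^4)^2) * (s^2*L - s^3) := by
  have hs8 : (0:ℝ) < s^8 := by positivity
  rw [← mul_nonneg_iff_of_pos_right hs8]
  have hexp : (-((-(1/4)*((s^6)⁻¹)*L + (3/16)*((s^5)⁻¹))
          + ((1/2)*((s^2)⁻¹)*L - (s^2)⁻¹ - (3/4)*s⁻¹) * K)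
        - (1/4)/((s^4)^2) * (s^2*L - s^3)) * s^8
      = (1/16)*s^3 - ((1/2)*s^6*L - s^6 - (3/4)*s^7) * K := by
    field_simp
    ring
  rw [hexp, sub_nonneg]
  obtain ⟨f5, f6, f7⟩ := spow_facts hs hs1 hM hsM
  have h6L : s^6 * L ≤ 4 * s^5 := by
    have h : s^6 * L = (L * s) * s^5 := by ring
    rw [h]
    exact mul_le_mul_of_nonneg_right hLs (by positivity)
  have habs : |(1/2)*s^6*L - s^6 - (3/4)*s^7| ≤ 2*s^5 + s^6 + (3/4)*s^7 := by
    have h6 : (0:ℝ) ≤ s^6 := by positivity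
    have h7 : (0:ℝ) ≤ s^7 := by positivity
    have h5 : (0:ℝ) ≤ s^5 := by positivity
    have h6L' : (0:ℝ) ≤ s^6 * L := mul_nonneg h6 hL
    rw [abs_le]; constructor <;> nlinarith
  have := abs_bound_mul habs hK
  nlinarith [this]

-- ### facts about points in a good collar

lemma tfacts {t σ M : ℝ} (hM : 1 ≤ M) (hσe : σ ≤ Real.exp (-2)) (hσM : σ ≤ ((128*M)⁻¹)^2)
    (ht : 0 < t) (htσ : t < σ) :
    0 < t^((1:ℝ)/4) ∧ t^((1:ℝ)/4) < 1 ∧ M * (t^((1:ℝ)/4))^2 ≤ 1/128 ∧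
      2 ≤ -Real.log t ∧ (-Real.log t) * t^((1:ℝ)/4) ≤ 4 := by
  have hMpos : (0:ℝ) < M := by linarith
  have hte : t < Real.exp (-2) := lt_of_lt_of_le htσ hσe
  have ht1 : t < 1 := lt_of_lt_of_le hte (by
    rw [show (1:ℝ) = Real.exp 0 by simp]
    exact (Real.exp_le_exp.mpr (by norm_num)))
  have hs : 0 < t^((1:ℝ)/4) := Real.rpow_pos_of_pos ht _
  have hs1 : t^((1:ℝ)/4) < 1 := Real.rpow_lt_one ht.le ht1 (by norm_num)
  refine ⟨hs, hs1, ?_, ?_, ?_⟩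
  · have e2 : (t^((1:ℝ)/4))^2 = t^((1:ℝ)/2) :=
      (quarter_pow ht (p := (1:ℝ)/2) 2 (by norm_num)).symm
    rw [e2]
    have h1 : t^((1:ℝ)/2) ≤ σ^((1:ℝ)/2) := Real.rpow_le_rpow ht.le htσ.le (by norm_num)
    have hc : (0:ℝ) ≤ (128*M)⁻¹ := by positivity
    have h2 : σ^((1:ℝ)/2) ≤ (((128*M)⁻¹)^2)^((1:ℝ)/2) :=
      Real.rpow_le_rpow (le_trans ht.le htσ.le) hσM (by norm_num)
    have h3 : (((128*M)⁻¹)^2 : ℝ)^((1:ℝ)/2) = (128*M)⁻¹ := by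
      rw [← Real.rpow_natCast ((128*M)⁻¹) 2, ← Real.rpow_mul hc]
      norm_num
    have h4 : t^((1:ℝ)/2) ≤ (128*M)⁻¹ := by rw [h3] at h2; exact h1.trans h2
    calc M * t^((1:ℝ)/2) ≤ M * (128*M)⁻¹ :=
          mul_le_mul_of_nonneg_left h4 hMpos.le
      _ = 1/128 := by field_simp
  · have := Real.log_lt_log ht hte
    rw [Real.log_exp] at this
    linarith
  · have hlogs : Real.log (t^((1:ℝ)/4)) = (1/4) * Real.log t := Real.log_rpow ht _
    have hinv : Real.log ((t^((1:ℝ)/4))⁻¹) ≤ (t^((1:ℝ)/4))⁻¹ - 1 :=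
      Real.log_le_sub_one_of_pos (by positivity)
    rw [Real.log_inv, hlogs] at hinv
    have hL : -Real.log t ≤ 4 * (t^((1:ℝ)/4))⁻¹ := by linarith
    calc (-Real.log t) * t^((1:ℝ)/4) ≤ (4 * (t^((1:ℝ)/4))⁻¹) * t^((1:ℝ)/4) :=
          mul_le_mul_of_nonneg_right hL hs.le
      _ = 4 := by field_simp

-- ### algebra lemmas in the exact goal shapes

lemma alg1' {s K M : ℝ} (hs : 0 < s) (hs1 : s ≤ 1) (hM : 1 ≤ M) (hK : |K| ≤ M)
    (hsM : M * s^2 ≤ 1/128) :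
    0 ≤ -((-(1/4)*((s^6)⁻¹) + (3/16)*((s^5)⁻¹) + ((1/2)*((s^2)⁻¹) - (3/4)*(s^1)⁻¹) * K))
        - 1/4/((s^4)^2) * (s^2 - s^3) := by
  have := alg1 hs hs1 hM hK hsM
  have e : (s^1)⁻¹ = s⁻¹ := by rw [pow_one]
  rw [e]
  linarith [this]

lemma alg2' {s ℓ K M : ℝ} (hs : 0 < s) (hs1 : s ≤ 1) (hM : 1 ≤ M) (hK : |K| ≤ M)
    (hsM : M * s^2 ≤ 1/128) (hl0 : ℓ ≤ 0) (hls : (-ℓ) * s ≤ 4) :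
    0 ≤ -(((1/4)*((s^6)⁻¹)*ℓ + (3/16)*((s^5)⁻¹)
          + (-((1/2)*((s^2)⁻¹)*ℓ + (s^2)⁻¹) - (3/4)*(s^1)⁻¹) * K))
        - 1/4/((s^4)^2) * (-(s^2*ℓ) - s^3) := by
  have := alg2 hs hs1 hM hK hsM (L := -ℓ) (by linarith) hls
  have e : (s^1)⁻¹ = s⁻¹ := by rw [pow_one]
  rw [e]
  nlinarith [this]

-- ### the two explicit positive local super-harmonics

lemma posSuperHarm_phi1 {N : ℕ} (hN : 2 ≤ N) {Ω : Set (EuclideanSpace ℝ (Fin N))}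
    (hΩo : IsOpen Ω) (hΩb : Bornology.IsBounded Ω) {ρ₀ M σ : ℝ}
    (hδC2 : ContDiffOn ℝ 2 (bdist Ω) (collar Ω ρ₀))
    (hgrad : ∀ x ∈ collar Ω ρ₀, ‖gradient (bdist Ω) x‖ = 1)
    (hMb : ∀ x ∈ collar Ω ρ₀, |lap (bdist Ω) x| ≤ M) (hM : 1 ≤ M)
    (hσρ : σ ≤ ρ₀) (hσe : σ ≤ Real.exp (-2)) (hσM : σ ≤ ((128*M)⁻¹)^2) :
    PosSuperHarmOn Ω (1/4) σ (fun y => phi1 (bdist Ω y)) := by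
  have hδx : ∀ x ∈ collar Ω σ, ContDiffAt ℝ 2 (bdist Ω) x := fun x hx =>
    hδC2.contDiffAt ((collar_open hΩo ρ₀).mem_nhds (collar_mono hσρ hx))
  have htp : ∀ x ∈ collar Ω σ, 0 < bdist Ω x := fun x hx => bdist_pos hN hΩo hΩb hx.1
  refine ⟨⟨fun x hx => ((phi1_contDiffAt (htp x hx)).comp x (hδx x hx)).contDiffWithinAt,
    ?_⟩, ?_⟩
  · intro x hx
    set t := bdist Ω x with ht_def
    have ht : 0 < t := htp x hx
    obtain ⟨hs, hs1, hsM, hL2, hLs⟩ := tfacts hM hσe hσM ht hx.2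
    have hl := lap_comp (bdist Ω) phi1 x (hδx x hx) (phi1_contDiffAt ht)
    rw [sum_sq_fderiv _ _ (hgrad x (collar_mono hσρ hx)), mul_one] at hl
    obtain ⟨hd1, hd2⟩ := phi1_calc ht
    rw [hl, hd1, hd2]
    simp only [phi1]
    have hKb : |lap (bdist Ω) x| ≤ M := hMb x (collar_mono hσρ hx)
    have e4 : t ^ (2:ℕ) = ((t^((1:ℝ)/4))^4)^(2:ℕ) := by
      rw [← quarter_pow ht (p := (1:ℝ)) 4 (by norm_num), Real.rpow_one]
    rw [e4,
      quarter_pow ht (p := (1:ℝ)/2) 2 (by norm_num),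
      quarter_pow ht (p := (3:ℝ)/4) 3 (by norm_num),
      quarter_pow_neg ht (p := -((1:ℝ)/2)) 2 (by norm_num),
      quarter_pow_neg ht (p := -((1:ℝ)/4)) 1 (by norm_num),
      quarter_pow_neg ht (p := -((3:ℝ)/2)) 6 (by norm_num),
      quarter_pow_neg ht (p := -((5:ℝ)/4)) 5 (by norm_num)]
    exact alg1' hs hs1.le hM hKb hsM
  · intro x hx
    have ht : 0 < bdist Ω x := htp x hx
    obtain ⟨hs, hs1, -, -, -⟩ := tfacts hM hσe hσM ht hx.2
    simp only [phi1]
    rw [quarter_pow ht (p := (1:ℝ)/2) 2 (by norm_num),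
      quarter_pow ht (p := (3:ℝ)/4) 3 (by norm_num)]
    nlinarith [mul_pos (mul_pos hs hs) (sub_pos.2 hs1), pow_pos hs 2, pow_pos hs 3]

lemma posSuperHarm_phi2 {N : ℕ} (hN : 2 ≤ N) {Ω : Set (EuclideanSpace ℝ (Fin N))}
    (hΩo : IsOpen Ω) (hΩb : Bornology.IsBounded Ω) {ρ₀ M σ : ℝ}
    (hδC2 : ContDiffOn ℝ 2 (bdist Ω) (collar Ω ρ₀))
    (hgrad : ∀ x ∈ collar Ω ρ₀, ‖gradient (bdist Ω) x‖ = 1)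
    (hMb : ∀ x ∈ collar Ω ρ₀, |lap (bdist Ω) x| ≤ M) (hM : 1 ≤ M)
    (hσρ : σ ≤ ρ₀) (hσe : σ ≤ Real.exp (-2)) (hσM : σ ≤ ((128*M)⁻¹)^2) :
    PosSuperHarmOn Ω (1/4) σ (fun y => phi2 (bdist Ω y)) := by
  have hδx : ∀ x ∈ collar Ω σ, ContDiffAt ℝ 2 (bdist Ω) x := fun x hx =>
    hδC2.contDiffAt ((collar_open hΩo ρ₀).mem_nhds (collar_mono hσρ hx))
  have htp : ∀ x ∈ collar Ω σ, 0 < bdist Ω x := fun x hx => bdist_pos hN hΩo hΩb hx.1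
  refine ⟨⟨fun x hx => ((phi2_contDiffAt (htp x hx)).comp x (hδx x hx)).contDiffWithinAt,
    ?_⟩, ?_⟩
  · intro x hx
    set t := bdist Ω x with ht_def
    have ht : 0 < t := htp x hx
    obtain ⟨hs, hs1, hsM, hL2, hLs⟩ := tfacts hM hσe hσM ht hx.2
    have hl := lap_comp (bdist Ω) phi2 x (hδx x hx) (phi2_contDiffAt ht)
    rw [sum_sq_fderiv _ _ (hgrad x (collar_mono hσρ hx)), mul_one] at hl
    obtain ⟨hd1, hd2⟩ := phi2_calc ht
    rw [hl, hd1, hd2]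
    simp only [phi2]
    have hKb : |lap (bdist Ω) x| ≤ M := hMb x (collar_mono hσρ hx)
    have e4 : t ^ (2:ℕ) = ((t^((1:ℝ)/4))^4)^(2:ℕ) := by
      rw [← quarter_pow ht (p := (1:ℝ)) 4 (by norm_num), Real.rpow_one]
    rw [e4,
      quarter_pow ht (p := (1:ℝ)/2) 2 (by norm_num),
      quarter_pow ht (p := (3:ℝ)/4) 3 (by norm_num),
      quarter_pow_neg ht (p := -((1:ℝ)/2)) 2 (by norm_num),
      quarter_pow_neg ht (p := -((1:ℝ)/4)) 1 (by norm_num),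
      quarter_pow_neg ht (p := -((3:ℝ)/2)) 6 (by norm_num),
      quarter_pow_neg ht (p := -((5:ℝ)/4)) 5 (by norm_num)]
    exact alg2' hs hs1.le hM hKb hsM (by linarith) hLs
  · intro x hx
    have ht : 0 < bdist Ω x := htp x hx
    obtain ⟨hs, hs1, -, hL2, -⟩ := tfacts hM hσe hσM ht hx.2
    simp only [phi2]
    rw [quarter_pow ht (p := (1:ℝ)/2) 2 (by norm_num),
      quarter_pow ht (p := (3:ℝ)/4) 3 (by norm_num)]
    set s := (bdist Ω x)^((1:ℝ)/4)
    nlinarith [pow_pos hs 2, pow_pos hs 3, mul_pos (pow_pos hs 2) (by linarith : (0:ℝ) < 2 - s)]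

/-- Let `μ = 1/4`. (a) A small local sub-harmonic `u` of `L_{1/4}`
satisfies `limsup_{δ(x)→0} u(x)/δ(x)^{1/2} < ∞`. (b) A large local sub-harmonic `U` of
`L_{1/4}` satisfies `limsup_{δ(x)→0} U(x)/(δ(x)^{1/2}·log(1/δ(x))) > 0`. -/
theorem stmt8 {N : ℕ} (hN : 2 ≤ N) (Ω : Set (EuclideanSpace ℝ (Fin N)))
    (hΩo : IsOpen Ω) (hΩne : Ω.Nonempty) (hΩb : Bornology.IsBounded Ω)
    (ρ₀ : ℝ) (hρ₀ : GoodCollar Ω ρ₀) :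
    (∀ u : EuclideanSpace ℝ (Fin N) → ℝ, ∀ ρ, 0 < ρ →
      SubHarm Ω (1 / 4) (collar Ω ρ) u → SmallSubHarm Ω (1 / 4) u ρ →
      ∃ C : ℝ, ∃ τ, 0 < τ ∧ τ ≤ ρ ∧
        ∀ x ∈ collar Ω τ, u x / bdist Ω x ^ (1 / 2 : ℝ) ≤ C) ∧
    (∀ U : EuclideanSpace ℝ (Fin N) → ℝ, ∀ ρ, 0 < ρ →
      SubHarm Ω (1 / 4) (collar Ω ρ) U → LargeSubHarm Ω (1 / 4) U ρ →
      ∃ c, 0 < c ∧ ∀ τ, 0 < τ → τ ≤ ρ →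
        ∃ x ∈ collar Ω τ,
          c ≤ U x / (bdist Ω x ^ (1 / 2 : ℝ) * Real.log (1 / bdist Ω x))) := by
  obtain ⟨hρpos, hδC2, hgrad, M0, hM0⟩ := hρ₀
  set M := max M0 1 with hM_def
  have hM1 : (1:ℝ) ≤ M := le_max_right _ _
  have hMb : ∀ x ∈ collar Ω ρ₀, |lap (bdist Ω) x| ≤ M := fun x hx =>
    (hM0 x hx).trans (le_max_left _ _)
  set σ := min ρ₀ (min (Real.exp (-2)) (((128*M)⁻¹)^2)) with hσ_def
  have hσpos : 0 < σ := lt_min hρpos (lt_min (Real.exp_pos _) (by positivity))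
  have hσρ : σ ≤ ρ₀ := min_le_left _ _
  have hσe : σ ≤ Real.exp (-2) := (min_le_right _ _).trans (min_le_left _ _)
  have hσM : σ ≤ ((128*M)⁻¹)^2 := (min_le_right _ _).trans (min_le_right _ _)
  have hh1 := posSuperHarm_phi1 hN hΩo hΩb hδC2 hgrad hMb hM1 hσρ hσe hσM
  have hh2 := posSuperHarm_phi2 hN hΩo hΩb hδC2 hgrad hMb hM1 hσρ hσe hσM
  constructor
  · intro u ρ hρ hsub hsmall
    obtain ⟨C, τ, hτ, hτle, hbound⟩ := hsmall σ hσpos _ hh1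
    refine ⟨max C 0, τ, hτ, hτle.trans (min_le_left _ _), ?_⟩
    intro x hx
    have hxσ : x ∈ collar Ω σ := collar_mono (hτle.trans (min_le_right _ _)) hx
    have ht : 0 < bdist Ω x := bdist_pos hN hΩo hΩb hx.1
    have hpos : 0 < phi1 (bdist Ω x) := hh1.2 x hxσ
    have hu : u x ≤ C * phi1 (bdist Ω x) := (div_le_iff₀ hpos).mp (hbound x hx)
    have hphile : phi1 (bdist Ω x) ≤ (bdist Ω x)^((1:ℝ)/2) := by
      simp only [phi1]
      have h34 : 0 ≤ (bdist Ω x)^((3:ℝ)/4) := Real.rpow_nonneg ht.le _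
      linarith
    have hhalf : 0 < (bdist Ω x)^((1:ℝ)/2) := Real.rpow_pos_of_pos ht _
    rw [div_le_iff₀ hhalf]
    calc u x ≤ C * phi1 (bdist Ω x) := hu
      _ ≤ max C 0 * phi1 (bdist Ω x) := mul_le_mul_of_nonneg_right (le_max_left _ _) hpos.le
      _ ≤ max C 0 * (bdist Ω x)^((1:ℝ)/2) :=
          mul_le_mul_of_nonneg_left hphile (le_max_right _ _)
  · intro U ρ hρ hsub hlarge
    obtain ⟨c, hc, hP⟩ := hlarge σ hσpos _ hh2
    refine ⟨c/2, by positivity, ?_⟩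
    intro τ hτ hτρ
    obtain ⟨x, hx, hge⟩ := hP (min τ σ) (lt_min hτ hσpos) (min_le_min hτρ le_rfl)
    refine ⟨x, collar_mono (min_le_left τ σ) hx, ?_⟩
    have hxσ : x ∈ collar Ω σ := collar_mono (min_le_right _ _) hx
    set t := bdist Ω x with ht_def
    have ht : 0 < t := bdist_pos hN hΩo hΩb hx.1
    obtain ⟨hs, hs1, -, hL2, -⟩ := tfacts hM1 hσe hσM ht hxσ.2
    have hposh : 0 < phi2 t := hh2.2 x hxσ
    have hUx : c * phi2 t ≤ U x := (le_div_iff₀ hposh).mp hge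
    have hlog : Real.log (1/t) = -Real.log t := by rw [one_div, Real.log_inv]
    set L := -Real.log t with hL_def
    have h34 : t^((3:ℝ)/4) = t^((1:ℝ)/2) * t^((1:ℝ)/4) := by
      rw [← Real.rpow_add ht]; norm_num
    have hhalfpos : 0 < t^((1:ℝ)/2) := Real.rpow_pos_of_pos ht _
    have hphi2ge : (1/2) * (t^((1:ℝ)/2) * L) ≤ phi2 t := by
      simp only [phi2]
      have : t^((1:ℝ)/2) * t^((1:ℝ)/4) ≤ t^((1:ℝ)/2) * (L/2) :=
        mul_le_mul_of_nonneg_left (by linarith) hhalfpos.le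
      rw [h34]
      have hlt : -(t ^ ((1:ℝ)/2) * Real.log t) = t^((1:ℝ)/2) * L := by
        rw [hL_def]; ring
      rw [hlt]
      nlinarith [hhalfpos]
    have hDpos : 0 < t^((1:ℝ)/2) * L := mul_pos hhalfpos (by linarith)
    rw [hlog, le_div_iff₀ hDpos]
    calc c/2 * (t ^ ((1:ℝ)/2) * L) = c * ((1/2) * (t ^ ((1:ℝ)/2) * L)) := by ring
      _ ≤ c * phi2 t := mul_le_mul_of_nonneg_left hphi2ge hc.le
      _ ≤ U x := hUx
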